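/- Let α : J → ℝ³ be a smooth unit-speed curve on an open interval J with Frenet frame (T, N, B) satisfying T' = κN, N' = −κT + τB, B' = −τN, where κ, τ : J → ℝ are smooth and κ is nowhere zero. Fix x₀ ∈ J and a₀ ∈ ℝ, and set s(x) = −∫_{x₀}^x τ(u) du + a₀, W(x) = cos(s(x)) N(x) + sin(s(x)) B(x), and JW(x) = −sin(s(x)) N(x) + cos(s(x)) B(x). Then W' = −(κ cos s) T and (JW)' = (κ sin s) T; in particular the derivatives of W and JW are everywhere parallel to T, so (T, W, JW) is a relatively parallel (Bishop) adapted frame along α. -/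

import Mathlib

open scoped RealInnerProductSpace

/-- the frame `(T, W, JW)` with `W = cos(s)N + sin(s)B`,
`s(x) = −∫_{x₀}^x τ + a₀`, is a relatively parallel (Bishop) adapted frame:
`W' = −(κ cos s)T` and `(JW)' = (κ sin s)T`. -/
theorem stmt_6 (J : Set ℝ) (hJ : IsOpen J) (hJconn : J.OrdConnected)
    (α T N B : ℝ → EuclideanSpace ℝ (Fin 3)) (κ τ : ℝ → ℝ)
    (hτcont : Continuous τ)
    (hα : ∀ x ∈ J, HasDerivAt α (T x) x)
    (hunit : ∀ x ∈ J, ‖T x‖ = 1)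
    (hκ : ∀ x ∈ J, κ x ≠ 0)
    (hT : ∀ x ∈ J, HasDerivAt T (κ x • N x) x)
    (hN : ∀ x ∈ J, HasDerivAt N (-(κ x) • T x + τ x • B x) x)
    (hB : ∀ x ∈ J, HasDerivAt B (-(τ x) • N x) x)
    (x₀ : ℝ) (hx₀ : x₀ ∈ J) (a₀ : ℝ)
    (s : ℝ → ℝ) (hs : ∀ x, s x = -(∫ u in x₀..x, τ u) + a₀)
    (W JW : ℝ → EuclideanSpace ℝ (Fin 3))
    (hW : ∀ x, W x = Real.cos (s x) • N x + Real.sin (s x) • B x)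
    (hJW : ∀ x, JW x = -Real.sin (s x) • N x + Real.cos (s x) • B x) :
    ∀ x ∈ J,
      HasDerivAt W (-(κ x * Real.cos (s x)) • T x) x ∧
      HasDerivAt JW ((κ x * Real.sin (s x)) • T x) x := by
  intro x hx
  have hsd : HasDerivAt s (-(τ x)) x := by
    have h1 : HasDerivAt (fun y => (∫ u in x₀..y, τ u)) (τ x) x :=
      (hτcont.integral_hasStrictDerivAt x₀ x).hasDerivAt
    have h2 : HasDerivAt (fun y => -(∫ u in x₀..y, τ u) + a₀) (-(τ x)) x :=
      h1.neg.add_const a₀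
    exact h2.congr_of_eventuallyEq (Filter.Eventually.of_forall fun y => hs y)
  have hcos : HasDerivAt (fun y => Real.cos (s y)) (-Real.sin (s x) * -(τ x)) x :=
    hsd.cos
  have hsin : HasDerivAt (fun y => Real.sin (s y)) (Real.cos (s x) * -(τ x)) x :=
    hsd.sin
  have hNx := hN x hx
  have hBx := hB x hx
  constructor
  · have h := (hcos.smul hNx).add (hsin.smul hBx)
    have h' :=       h.congr_of_eventuallyEq (Filter.Eventually.of_forall fun y => hW y)
    refine h'.congr_deriv ?_
    module
  · have h := ((hsin.neg.smul hNx).add (hcos.smul hBx))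
    have h' :=       h.congr_of_eventuallyEq (Filter.Eventually.of_forall fun y => hJW y)
    refine h'.congr_deriv ?_
    simp only [Pi.neg_apply]
    module
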